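/- Let q > 2 be an integer and let (P, L) be a finite projective plane of order q: P is a point set with |P| = q²+q+1, L is a family of (q+1)-element subsets of P (lines) such that any two distinct points lie on exactly one common line and any two distinct lines intersect in exactly one point. Then L is NOT a resolving set for the Kneser graph K(q²+q+1, q+1) on the point set P. -/

import Mathlib

/-- The Kneser graph `K(n,k)` on a ground set `X`: vertices are the `k`-element
subsets of `X`, two vertices adjacent iff the corresponding subsets are disjoint. -/
def kneserGraphOn (X : Type*) [DecidableEq X] (k : ℕ) :
    SimpleGraph {s : Finset X // s.card = k} where
  Adj U W := U ≠ W ∧ Disjoint U.1 W.1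
  symm := by
    constructor
    intro U W h
    exact ⟨h.1.symm, h.2.symm⟩
  loopless := by
    constructor
    intro U h
    exact h.1 rfl

/-- A set `S` of vertices is a resolving set for `G` if every pair of distinct
vertices is resolved by some vertex of `S`, i.e. is at different distances from it. -/
def resolvingSet {V : Type*} (G : SimpleGraph V) (S : Set V) : Prop :=
  ∀ u v : V, u ≠ v → ∃ x ∈ S, G.dist u x ≠ G.dist v x

/-- The metric dimension `β(G)`: the minimum cardinality of a resolving set for `G`. -/
noncomputable def metricDim {V : Type*} (G : SimpleGraph V) : ℕ :=
  sInf {m | ∃ S : Finset V, resolvingSet G ↑S ∧ S.card = m}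

/-- For a finite projective plane of order `q > 2`, the set of lines is NOT a
resolving set for the Kneser graph `K(q²+q+1, q+1)` on the point set. -/
theorem projective_plane_not_resolving_kneser
    (q : ℕ) (hq : 2 < q) (P : Type*) [Fintype P] [DecidableEq P]
    (hP : Fintype.card P = q ^ 2 + q + 1)
    (L : Finset (Finset P))
    -- every line has `q+1` points
    (hline : ∀ M ∈ L, M.card = q + 1)
    -- two distinct points lie on exactly one common line
    (hpp : ∀ p₁ p₂ : P, p₁ ≠ p₂ → ∃! M, M ∈ L ∧ p₁ ∈ M ∧ p₂ ∈ M)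
    -- two distinct lines meet in exactly one point
    (hll : ∀ M ∈ L, ∀ N ∈ L, M ≠ N → (M ∩ N).card = 1) :
    ¬ resolvingSet (kneserGraphOn P (q + 1)) {X | X.1 ∈ L} := by
  classical
  -- two distinct points
  have h1 : 1 < Fintype.card P := by nlinarith
  obtain ⟨a0, b0, hab0⟩ := Fintype.exists_pair_of_one_lt_card h1
  obtain ⟨M, ⟨hM, haM, hbM⟩, -⟩ := hpp a0 b0 hab0
  set a := a0 with ha_def
  have hMcard : M.card = q + 1 := hline M hM
  -- a point off M
  obtain ⟨c, hc⟩ : ∃ c, c ∉ M := by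
    by_contra h
    push_neg at h
    have : Fintype.card P ≤ M.card := by
      rw [← Finset.card_univ]
      exact Finset.card_le_card (fun x _ => h x)
    rw [hP, hMcard] at this
    nlinarith
  have hac : a ≠ c := fun h => hc (h ▸ haM)
  obtain ⟨T, ⟨hT, haT, hcT⟩, -⟩ := hpp a c hac
  have hMT : M ≠ T := fun h => hc (h ▸ hcT)
  have hMTi : M ∩ T = {a} := by
    have h1 := hll M hM T hT hMT
    obtain ⟨w, hw⟩ := Finset.card_eq_one.mp h1
    have : a ∈ ({w} : Finset P) := hw ▸ Finset.mem_inter.mpr ⟨haM, haT⟩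
    rw [Finset.mem_singleton] at this
    rw [hw, this]
  -- two points on T other than a
  have hTe : 1 < (T.erase a).card := by
    rw [Finset.card_erase_of_mem haT, hline T hT]
    omega
  obtain ⟨p, hp, p', hp', hpp'⟩ := Finset.one_lt_card.mp hTe
  -- membership facts
  have hmemM : ∀ x ∈ T.erase a, x ∉ M := by
    intro x hx hxM
    have : x ∈ M ∩ T := Finset.mem_inter.mpr ⟨hxM, Finset.mem_of_mem_erase hx⟩
    rw [hMTi, Finset.mem_singleton] at this
    exact (Finset.ne_of_mem_erase hx) this
  -- the two vertices
  have hcard : ∀ x ∈ T.erase a, (insert x (M.erase a)).card = q + 1 := by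
    intro x hx
    rw [Finset.card_insert_of_notMem (fun h => hmemM x hx (Finset.mem_of_mem_erase h)),
      Finset.card_erase_of_mem haM, hMcard]
    omega
  have hnotL : ∀ x ∈ T.erase a, insert x (M.erase a) ∉ L := by
    intro x hx hxL
    have hne : insert x (M.erase a) ≠ M := by
      intro h
      exact hmemM x hx (h ▸ Finset.mem_insert_self x _)
    have h1 := hll _ hxL M hM hne
    have h2 : M.erase a ⊆ insert x (M.erase a) ∩ M :=
      fun z hz => Finset.mem_inter.mpr ⟨Finset.mem_insert_of_mem hz, Finset.mem_of_mem_erase hz⟩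
    have := Finset.card_le_card h2
    rw [h1, Finset.card_erase_of_mem haM, hMcard] at this
    omega
  have hMea : (M.erase a).Nonempty := by
    rw [← Finset.card_pos, Finset.card_erase_of_mem haM, hMcard]; omega
  -- key: disjointness transfer
  have key : ∀ x ∈ T.erase a, ∀ y ∈ T.erase a, ∀ N ∈ L,
      Disjoint (insert x (M.erase a)) N → Disjoint (insert y (M.erase a)) N := by
    intro x hx y hy N hN hdisj
    rw [Finset.disjoint_insert_left] at hdisj ⊢
    obtain ⟨hxN, hdisjE⟩ := hdisj
    refine ⟨?_, hdisjE⟩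
    -- a ∈ N
    have hNM : N ≠ M := by
      obtain ⟨z, hz⟩ := hMea
      intro h
      exact (Finset.disjoint_left.mp hdisjE hz) (h ▸ Finset.mem_of_mem_erase hz)
    have haN : a ∈ N := by
      have h1 := hll N hN M hM hNM
      obtain ⟨w, hw⟩ := Finset.card_eq_one.mp h1
      have hwN : w ∈ N ∧ w ∈ M := by
        have := hw ▸ Finset.mem_singleton_self w
        exact ⟨(Finset.mem_inter.mp this).1, (Finset.mem_inter.mp this).2⟩
      have hwa : w = a := by
        by_contra hwa
        exact Finset.disjoint_left.mp hdisjE (Finset.mem_erase.mpr ⟨hwa, hwN.2⟩) hwN.1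
      exact hwa ▸ hwN.1
    -- y ∉ N
    intro hyN
    have hya : y ≠ a := Finset.ne_of_mem_erase hy
    obtain ⟨W, -, huniq⟩ := hpp y a hya
    have hNT : N = T := by
      rw [huniq N ⟨hN, hyN, haN⟩, huniq T ⟨hT, Finset.mem_of_mem_erase hy, haT⟩]
    exact hxN (hNT ▸ Finset.mem_of_mem_erase hx)
  -- distance-2 lemma
  have dist2 : ∀ A B : {s : Finset P // s.card = q + 1}, A ≠ B → ¬ Disjoint A.1 B.1 →
      (kneserGraphOn P (q+1)).dist A B = 2 := by
    intro A B hne hnd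
    have hUB : (A.1 ∪ B.1).card ≤ 2 * (q + 1) := by
      calc (A.1 ∪ B.1).card ≤ A.1.card + B.1.card := Finset.card_union_le _ _
      _ = 2 * (q + 1) := by rw [A.2, B.2]; ring
    have hcompl : q + 1 ≤ (A.1 ∪ B.1)ᶜ.card := by
      have h3 : 2 * (q + 1) + (q + 1) ≤ q ^ 2 + q + 1 := by nlinarith
      rw [Finset.card_compl, hP]
      omega
    obtain ⟨W0, hW0sub, hW0card⟩ := Finset.exists_subset_card_eq hcompl
    have hdA : Disjoint A.1 W0 := by
      rw [Finset.disjoint_right]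
      intro z hz
      have := hW0sub hz
      rw [Finset.mem_compl, Finset.mem_union] at this
      exact fun h => this (Or.inl h)
    have hdB : Disjoint W0 B.1 := by
      rw [Finset.disjoint_left]
      intro z hz
      have := hW0sub hz
      rw [Finset.mem_compl, Finset.mem_union] at this
      exact fun h => this (Or.inr h)
    set W : {s : Finset P // s.card = q + 1} := ⟨W0, hW0card⟩ with hW
    have hAW : (kneserGraphOn P (q+1)).Adj A W := by
      refine ⟨?_, hdA⟩
      intro h
      have : A.1 = W0 := congrArg Subtype.val h
      rw [this] at hdA
      have := disjoint_self.mp hdA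
      rw [this] at hW0card
      simp at hW0card
    have hWB : (kneserGraphOn P (q+1)).Adj W B := by
      refine ⟨?_, hdB⟩
      intro h
      have h2 : W0 = B.1 := congrArg Subtype.val h
      rw [← h2] at hdB
      have h3 := disjoint_self.mp hdB
      rw [h3] at hW0card
      simp at hW0card
    have hle : (kneserGraphOn P (q+1)).dist A B ≤ 2 := by
      have := SimpleGraph.dist_le
        (SimpleGraph.Walk.cons hAW (SimpleGraph.Walk.cons hWB SimpleGraph.Walk.nil))
      simpa using this
    have hne0 : (kneserGraphOn P (q+1)).dist A B ≠ 0 := by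
      intro h
      rcases SimpleGraph.dist_eq_zero_iff_eq_or_not_reachable.mp h with h' | h'
      · exact hne h'
      · exact h' ⟨SimpleGraph.Walk.cons hAW (SimpleGraph.Walk.cons hWB SimpleGraph.Walk.nil)⟩
    have hne1 : (kneserGraphOn P (q+1)).dist A B ≠ 1 :=
      fun h => hnd (SimpleGraph.dist_eq_one_iff_adj.mp h).2
    omega
  -- the two vertices
  set U : {s : Finset P // s.card = q + 1} := ⟨insert p (M.erase a), hcard p hp⟩
  set V : {s : Finset P // s.card = q + 1} := ⟨insert p' (M.erase a), hcard p' hp'⟩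
  intro hres
  have hUV : U ≠ V := by
    intro h
    have h1 : insert p (M.erase a) = insert p' (M.erase a) := congrArg Subtype.val h
    have : p ∈ insert p' (M.erase a) := h1 ▸ Finset.mem_insert_self p _
    rcases Finset.mem_insert.mp this with h2 | h2
    · exact hpp' h2
    · exact hmemM p hp (Finset.mem_of_mem_erase h2)
  obtain ⟨x, hxL, hdist⟩ := hres U V hUV
  have hxL' : x.1 ∈ L := hxL
  have hUx : U ≠ x := by
    intro h
    apply hnotL p hp
    rw [show insert p (M.erase a) = x.1 from congrArg Subtype.val h]
    exact hxL'
  have hVx : V ≠ x := by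
    intro h
    apply hnotL p' hp'
    rw [show insert p' (M.erase a) = x.1 from congrArg Subtype.val h]
    exact hxL'
  apply hdist
  by_cases hd : Disjoint U.1 x.1
  · have hd' : Disjoint V.1 x.1 := key p hp p' hp' x.1 hxL' hd
    have hadjU : (kneserGraphOn P (q+1)).Adj U x := ⟨hUx, hd⟩
    have hadjV : (kneserGraphOn P (q+1)).Adj V x := ⟨hVx, hd'⟩
    rw [SimpleGraph.dist_eq_one_iff_adj.mpr hadjU,
      SimpleGraph.dist_eq_one_iff_adj.mpr hadjV]
  · have hd' : ¬ Disjoint V.1 x.1 := fun h => hd (key p' hp' p hp x.1 hxL' h)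
    rw [dist2 U x hUx hd, dist2 V x hVx hd']
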